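/- Let $X = \{-1, 0, 1\}$ with $f(-1) = 1$, $f(0) = 1/2$, $f(1) = -1$ and $g(-1) = -1$, $g(0) = 0$, $g(1) = 2$. Then for every $\eta > 0$ and every $\lambda \ge 0$, defining $L(x, \lambda) = f(x) + \eta \lambda g(x)$, we have $\min\{L(-1, \lambda), L(1, \lambda)\} \le 1/3 < 1/2 = L(0, \lambda)$; in particular $0$ is never a minimizer of $L(\cdot, \lambda)$ over $X$. -/
import Mathlib


theorem stmt13 (f g : ℝ → ℝ)
    (hf1 : f (-1) = 1) (hf0 : f 0 = 1/2) (hf2 : f 1 = -1)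
    (hg1 : g (-1) = -1) (hg0 : g 0 = 0) (hg2 : g 1 = 2)
    (η lam : ℝ) (hη : 0 < η) (hlam : 0 ≤ lam)
    (L : ℝ → ℝ) (hL : ∀ x, L x = f x + η * lam * g x) :
    min (L (-1)) (L 1) ≤ 1/3 ∧ (1/3 : ℝ) < 1/2 ∧ L 0 = 1/2 ∧
      min (L (-1)) (L 1) < L 0 := by
  have h1 : L (-1) = 1 - η * lam := by rw [hL, hf1, hg1]; ring
  have h2 : L 1 = -1 + 2 * (η * lam) := by rw [hL, hf2, hg2]; ring
  have h0 : L 0 = 1/2 := by rw [hL, hf0, hg0]; ring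
  have hel : 0 ≤ η * lam := mul_nonneg hη.le hlam
  have hmin : min (L (-1)) (L 1) ≤ 1/3 := by
    rcases le_total (η * lam) (2/3) with h | h
    · exact le_trans (min_le_right _ _) (by rw [h2]; linarith)
    · exact le_trans (min_le_left _ _) (by rw [h1]; linarith)
  exact ⟨hmin, by norm_num, h0, by rw [h0]; linarith⟩
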